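/- Let (A,B) be a nonempty, bounded, closed and convex pair in a reflexive and strictly convex Banach space X and let T : A ∪ B → A ∪ B be a noncyclic relatively nonexpansive mapping. Then T and the proximity projection P commute on A₀ ∪ B₀: for every x ∈ A₀, if u is the unique point of B₀ with ‖x−u‖ = dist(A,B), then Tu is the unique point of B₀ with ‖Tx − Tu‖ = dist(A,B); that is, P(Tx) = T(Px) for all x ∈ A₀ ∪ B₀. -/
import Mathlib


open Set

/-- `setDist A B = inf {‖x - y‖ : x ∈ A, y ∈ B}`. -/
noncomputable def setDist {X : Type*} [NormedAddCommGroup X] (A B : Set X) : ℝ :=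
  sInf ((fun p : X × X => ‖p.1 - p.2‖) '' (A ×ˢ B))

/-- `A₀ = {x ∈ A : ‖x - y‖ = dist(A,B) for some y ∈ B}`. -/
noncomputable def proxA {X : Type*} [NormedAddCommGroup X] (A B : Set X) : Set X :=
  {x ∈ A | ∃ y ∈ B, ‖x - y‖ = setDist A B}

/-- `B₀ = {y ∈ B : ‖x - y‖ = dist(A,B) for some x ∈ A}`. -/
noncomputable def proxB {X : Type*} [NormedAddCommGroup X] (A B : Set X) : Set X :=
  {y ∈ B | ∃ x ∈ A, ‖x - y‖ = setDist A B}

lemma setDist_le' {X : Type*} [NormedAddCommGroup X] {A B : Set X} {x y : X}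
    (hx : x ∈ A) (hy : y ∈ B) : setDist A B ≤ ‖x - y‖ := by
  apply csInf_le
  · exact ⟨0, by rintro r ⟨p, _, rfl⟩; exact norm_nonneg _⟩
  · exact ⟨(x, y), ⟨hx, hy⟩, rfl⟩

/-- Uniqueness of the proximal point via strict convexity. -/
lemma prox_unique {X : Type*} [NormedAddCommGroup X] [NormedSpace ℝ X]
    [StrictConvexSpace ℝ X] {B : Set X} (hBconv : Convex ℝ B) {d : ℝ}
    {p w₁ w₂ : X} (hlb : ∀ z ∈ B, d ≤ ‖p - z‖) (hw₁ : w₁ ∈ B) (hw₂ : w₂ ∈ B)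
    (h₁ : ‖p - w₁‖ = d) (h₂ : ‖p - w₂‖ = d) : w₁ = w₂ := by
  have hm : (1/2 : ℝ) • w₁ + (1/2 : ℝ) • w₂ ∈ B :=
    hBconv hw₁ hw₂ (by norm_num) (by norm_num) (by norm_num)
  have hd : d ≤ ‖p - ((1/2 : ℝ) • w₁ + (1/2 : ℝ) • w₂)‖ := hlb _ hm
  have key : p - ((1/2 : ℝ) • w₁ + (1/2 : ℝ) • w₂) = (1/2 : ℝ) • ((p - w₁) + (p - w₂)) := by
    module
  have h2d : ‖(p - w₁) + (p - w₂)‖ = ‖p - w₁‖ + ‖p - w₂‖ := by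
    have hle := norm_add_le (p - w₁) (p - w₂)
    have hge : ‖p - w₁‖ + ‖p - w₂‖ ≤ ‖(p - w₁) + (p - w₂)‖ := by
      rw [key, norm_smul] at hd
      simp only [Real.norm_eq_abs] at hd
      rw [show |(1/2 : ℝ)| = 1/2 by norm_num] at hd
      rw [h₁, h₂]
      linarith
    linarith
  have heq := eq_of_norm_eq_of_norm_add_eq (h₁.trans h₂.symm) h2d
  exact sub_right_injective heq

/-- A noncyclic relatively nonexpansive mapping `T` commutes with the proximity projection
`P` on `A₀ ∪ B₀`: if `u` is the unique proximal point of `x` in the opposite set, then `T u`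
is the unique proximal point of `T x`, i.e. `P (T x) = T (P x)`. -/
theorem noncyclic_commutes_with_proximity_projection
    {X : Type*} [NormedAddCommGroup X] [NormedSpace ℝ X] [CompleteSpace X]
    [StrictConvexSpace ℝ X]
    (hrefl : Function.Surjective (NormedSpace.inclusionInDoubleDual ℝ X))
    (A B : Set X) (hA : A.Nonempty) (hB : B.Nonempty)
    (hAbd : Bornology.IsBounded A) (hBbd : Bornology.IsBounded B)
    (hAcl : IsClosed A) (hBcl : IsClosed B)
    (hAconv : Convex ℝ A) (hBconv : Convex ℝ B)
    (T : X → X) (hTA : MapsTo T A A) (hTB : MapsTo T B B)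
    (hT : ∀ x ∈ A, ∀ y ∈ B, ‖T x - T y‖ ≤ ‖x - y‖) :
    (∀ x ∈ proxA A B, ∀ u ∈ proxB A B, ‖x - u‖ = setDist A B →
      T u ∈ proxB A B ∧ ‖T x - T u‖ = setDist A B ∧
        ∀ w ∈ proxB A B, ‖T x - w‖ = setDist A B → w = T u) ∧
    (∀ y ∈ proxB A B, ∀ v ∈ proxA A B, ‖v - y‖ = setDist A B →
      T v ∈ proxA A B ∧ ‖T v - T y‖ = setDist A B ∧
        ∀ w ∈ proxA A B, ‖w - T y‖ = setDist A B → w = T v) := by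
  constructor
  · intro x hx u hu hxu
    have hxA : x ∈ A := hx.1
    have huB : u ∈ B := hu.1
    have hTxA : T x ∈ A := hTA hxA
    have hTuB : T u ∈ B := hTB huB
    have heq : ‖T x - T u‖ = setDist A B :=
      le_antisymm (hxu ▸ hT x hxA u huB) (setDist_le' hTxA hTuB)
    refine ⟨⟨hTuB, T x, hTxA, heq⟩, heq, ?_⟩
    intro w hw hww
    exact prox_unique hBconv (fun z hz => setDist_le' hTxA hz) hw.1 hTuB hww heq
  · intro y hy v hv hvy
    have hyB : y ∈ B := hy.1
    have hvA : v ∈ A := hv.1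
    have hTyB : T y ∈ B := hTB hyB
    have hTvA : T v ∈ A := hTA hvA
    have heq : ‖T v - T y‖ = setDist A B :=
      le_antisymm (hvy ▸ hT v hvA y hyB) (setDist_le' hTvA hTyB)
    refine ⟨⟨hTvA, T y, hTyB, heq⟩, heq, ?_⟩
    intro w hw hww
    have h1 : ‖T y - w‖ = setDist A B := by rwa [norm_sub_rev] at hww
    have h2 : ‖T y - T v‖ = setDist A B := by rwa [norm_sub_rev] at heq
    exact prox_unique hAconv (fun z hz => by rw [norm_sub_rev]; exact setDist_le' hz hTyB) hw.1 hTvA h1 h2
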